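/- With the Dirac setup below, if the complement 𝔫 is additionally a Lie subalgebra of 𝔤 (⁅𝔫,𝔫⁆ ⊆ 𝔫), then C(q) = C(0) is invertible, and every entry of the transverse Poisson matrix Λ(q) = A(q) + B(q) C(0)⁻¹ D(q) is a polynomial function of q ∈ ℂ^k of total degree at most 2 (the transverse Poisson structure is quadratic). -/

import Mathlib

open Module Matrix

/-- A sum of terms `X s * C (c s)` has total degree at most 1. -/
lemma tpq_lin_deg {k : ℕ} (c : Fin k → ℂ) :
    (∑ s, MvPolynomial.X s * MvPolynomial.C (c s) : MvPolynomial (Fin k) ℂ).totalDegree ≤ 1 := by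
  refine le_trans (MvPolynomial.totalDegree_finset_sum _ _) (Finset.sup_le fun s _ => ?_)
  calc (MvPolynomial.X s * MvPolynomial.C (c s) : MvPolynomial (Fin k) ℂ).totalDegree
      ≤ (MvPolynomial.X s : MvPolynomial (Fin k) ℂ).totalDegree
        + (MvPolynomial.C (c s) : MvPolynomial (Fin k) ℂ).totalDegree :=
        MvPolynomial.totalDegree_mul _ _
    _ ≤ 1 := by simp [MvPolynomial.totalDegree_X, MvPolynomial.totalDegree_C]

/-- Dirac setup: if the complement 𝔫 is moreover a Lie subalgebra of 𝔤, then C(q) = C(0)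
is invertible and every entry of Λ(q) = A(q) + B(q) C(0)⁻¹ D(q) is a polynomial function
of q of total degree at most 2: the transverse Poisson structure is quadratic. -/
theorem transverse_poisson_quadratic_of_subalgebra_complement
    {L : Type*} [LieRing L] [LieAlgebra ℂ L] [FiniteDimensional ℂ L]
    [LieAlgebra.IsSemisimple ℂ L]
    (h e f : L)
    (hhe : ⁅h, e⁆ = (2 : ℂ) • e) (hhf : ⁅h, f⁆ = (-2 : ℂ) • f) (hef : ⁅e, f⁆ = h)
    (k p : ℕ) (ge 𝔫 : Submodule ℂ L)
    (hge : ∀ x, x ∈ ge ↔ ⁅e, x⁆ = 0)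
    (hcompl : IsCompl ge 𝔫)
    (hsub : ∀ x ∈ 𝔫, ∀ y ∈ 𝔫, ⁅x, y⁆ ∈ 𝔫)
    (hk : finrank ℂ ge = k) (hp : finrank ℂ 𝔫 = p)
    (BB : Basis (Fin k ⊕ Fin p) ℂ L)
    (hZ : ∀ i, BB (Sum.inl i) ∈ ge) (hX : ∀ j, BB (Sum.inr j) ∈ 𝔫)
    (Db : Fin k ⊕ Fin p → L)
    (hdual : ∀ a b, killingForm ℂ L (BB a) (Db b) = if a = b then 1 else 0)
    (ν : (Fin k → ℂ) → L) (hν : ∀ q, ν q = ∑ s, q s • Db (Sum.inl s))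
    (C : (Fin k → ℂ) → Matrix (Fin p) (Fin p) ℂ)
    (hC : ∀ q l m, C q l m = killingForm ℂ L (e + ν q) ⁅BB (Sum.inr l), BB (Sum.inr m)⁆)
    (D : (Fin k → ℂ) → Matrix (Fin p) (Fin k) ℂ)
    (hD : ∀ q l j, D q l j = killingForm ℂ L (ν q) ⁅BB (Sum.inr l), BB (Sum.inl j)⁆)
    (A : (Fin k → ℂ) → Matrix (Fin k) (Fin k) ℂ)
    (hA : ∀ q i j, A q i j = killingForm ℂ L (ν q) ⁅BB (Sum.inl i), BB (Sum.inl j)⁆) :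
    (∀ q, C q = C 0) ∧ IsUnit (C 0).det ∧
    ∀ i j : Fin k, ∃ P : MvPolynomial (Fin k) ℂ, P.totalDegree ≤ 2 ∧
      ∀ q, (A q + (D q)ᵀ * (C 0)⁻¹ * D q) i j = MvPolynomial.eval q P := by
  have hν0 : ν 0 = 0 := by simp [hν]
  -- 𝔫 is the span of the `BB (Sum.inr j)`.
  have li : LinearIndependent ℂ (BB ∘ Sum.inr) :=
    BB.linearIndependent.comp Sum.inr Sum.inr_injective
  have hspan : Submodule.span ℂ (Set.range (BB ∘ Sum.inr)) = 𝔫 := by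
    refine Submodule.eq_of_le_of_finrank_le ?_ ?_
    · rw [Submodule.span_le, Set.range_subset_iff]; intro j; exact hX j
    · rw [hp, finrank_span_eq_card li, Fintype.card_fin]
  -- elements of 𝔫 are orthogonal to each `Db (Sum.inl s)`.
  have horth : ∀ s : Fin k, ∀ x ∈ 𝔫, killingForm ℂ L x (Db (Sum.inl s)) = 0 := by
    intro s x hx
    rw [← hspan] at hx
    induction hx using Submodule.span_induction with
    | mem x hx =>
        obtain ⟨j, rfl⟩ := hx
        simpa using hdual (Sum.inr j) (Sum.inl s)
    | zero => simp
    | add x y _ _ hx hy => simp [map_add, hx, hy]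
    | smul c x _ hx => simp [_root_.map_smul, hx]
  -- ν q is orthogonal to 𝔫.
  have hνorth : ∀ q, ∀ x ∈ 𝔫, killingForm ℂ L (ν q) x = 0 := by
    intro q x hx
    rw [LieModule.traceForm_comm, hν, map_sum]
    simp only [LinearMap.map_smul, smul_eq_mul]
    refine Finset.sum_eq_zero fun s _ => ?_
    rw [horth s x hx, mul_zero]
  have hC0 : ∀ q l m, C q l m = killingForm ℂ L e ⁅BB (Sum.inr l), BB (Sum.inr m)⁆ := by
    intro q l m
    rw [hC]
    have hmem : ⁅BB (Sum.inr l), BB (Sum.inr m)⁆ ∈ 𝔫 := hsub _ (hX l) _ (hX m)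
    rw [map_add, LinearMap.add_apply, hνorth q _ hmem, add_zero]
  have hCconst : ∀ q, C q = C 0 := by
    intro q; ext l m; rw [hC0 q l m, hC0 0 l m]
  refine ⟨hCconst, ?_, ?_⟩
  · -- invertibility of C 0
    have hnd : (C 0).Nondegenerate := by
      rw [Matrix.nondegenerate_iff_separatingLeft, Matrix.separatingLeft_def]
      intro v hv
      set x : L := ∑ l, v l • BB (Sum.inr l) with hxdef
      have hxn : x ∈ 𝔫 := Submodule.sum_mem _ fun l _ => Submodule.smul_mem _ _ (hX l)
      -- killingForm ⁅e, x⁆ vanishes against each BB (Sum.inr m)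
      have hbr : ∀ z : L, ⁅x, z⁆ = ∑ l, v l • ⁅BB (Sum.inr l), z⁆ := by
        intro z
        have h0 : (LieModule.toEnd ℂ L L : L →ₗ[ℂ] Module.End ℂ L) x
            = ∑ l, v l • (LieModule.toEnd ℂ L L : L →ₗ[ℂ] Module.End ℂ L) (BB (Sum.inr l)) := by
          rw [hxdef, map_sum]
          exact Finset.sum_congr rfl fun l _ => by rw [LinearMap.map_smul]
        have h1 := congrArg (fun g : Module.End ℂ L => g z) h0
        simpa only [LieHom.coe_toLinearMap, LieModule.toEnd_apply_apply,
          LinearMap.sum_apply, LinearMap.smul_apply] using h1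
      have h1 : ∀ m, killingForm ℂ L ⁅e, x⁆ (BB (Sum.inr m)) = 0 := by
        intro m
        have hv' := hv (Pi.single m 1)
        simp only [dotProduct, Matrix.mulVec, Pi.single_apply, mul_ite, mul_one,
          mul_zero, Finset.sum_ite_eq', Finset.mem_univ, if_true] at hv'
        simp only [hC0] at hv'
        rw [LieModule.traceForm_apply_lie_apply, hbr (BB (Sum.inr m)), map_sum]
        simp only [LinearMap.map_smul, smul_eq_mul]
        exact hv'
      -- killingForm ⁅e, x⁆ vanishes against ge
      have h2 : ∀ z ∈ ge, killingForm ℂ L ⁅e, x⁆ z = 0 := by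
        intro z hz
        have : ⁅e, x⁆ = -⁅x, e⁆ := by rw [lie_skew]
        rw [this, map_neg, LinearMap.neg_apply,
          LieModule.traceForm_apply_lie_apply, (hge z).mp hz]
        simp
      -- hence it vanishes against everything
      have h3 : ∀ w, killingForm ℂ L ⁅e, x⁆ w = 0 := by
        intro w
        obtain ⟨a, ha, b, hb, rfl⟩ :=
          Submodule.mem_sup.mp (hcompl.sup_eq_top ▸ Submodule.mem_top : w ∈ ge ⊔ 𝔫)
        rw [map_add, h2 a ha, zero_add]
        -- b ∈ 𝔫, reduce to span
        rw [← hspan] at hb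
        induction hb using Submodule.span_induction with
        | mem b hbm => obtain ⟨m, rfl⟩ := hbm; exact h1 m
        | zero => simp
        | add u w _ _ hu hw => simp [map_add, hu, hw]
        | smul c u _ hu => simp [_root_.map_smul, hu]
      -- ⁅e, x⁆ = 0 since the killing form is nondegenerate thanks to the dual family
      have hex : ⁅e, x⁆ = 0 := by
        set y := ⁅e, x⁆ with hy
        have hco : ∀ b, BB.coord b y = 0 := by
          intro b
          have hyb := h3 (Db b)
          have hrep : killingForm ℂ L y (Db b) = BB.repr y b := by
            conv_lhs => rw [← BB.sum_repr y]
            rw [map_sum, LinearMap.sum_apply]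
            simp only [LinearMap.map_smul, LinearMap.smul_apply, smul_eq_mul, hdual]
            simp
          rw [hrep] at hyb
          simpa [Basis.coord_apply] using hyb
        exact (BB.forall_coord_eq_zero_iff).mp hco
      have hxge : x ∈ ge := (hge x).mpr hex
      have hx0 : x = 0 := by
        have : x ∈ ge ⊓ 𝔫 := ⟨hxge, hxn⟩
        rwa [hcompl.inf_eq_bot, Submodule.mem_bot] at this
      -- linear independence concludes v = 0
      have := linearIndependent_iff'.mp li Finset.univ v (by simpa [hxdef] using hx0)
      funext l; exact this l (Finset.mem_univ l)
    exact (Ne.isUnit (hnd.det_ne_zero))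
  · -- the polynomial part
    intro i j
    set c : Fin p → Fin p → ℂ := fun l m => (C 0)⁻¹ l m with hc
    set α : Fin k → ℂ := fun s =>
      killingForm ℂ L (Db (Sum.inl s)) ⁅BB (Sum.inl i), BB (Sum.inl j)⁆ with hα
    set d : Fin k → Fin p → Fin k → ℂ := fun s l j' =>
      killingForm ℂ L (Db (Sum.inl s)) ⁅BB (Sum.inr l), BB (Sum.inl j')⁆ with hd
    -- linear expansions
    have hAlin : ∀ q, A q i j = ∑ s, q s * α s := by
      intro q
      rw [hA, hν, map_sum, LinearMap.sum_apply]
      simp [smul_eq_mul, hα]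
    have hDlin : ∀ q l j', D q l j' = ∑ s, q s * d s l j' := by
      intro q l j'
      rw [hD, hν, map_sum, LinearMap.sum_apply]
      simp [smul_eq_mul, hd]
    refine ⟨(∑ s, MvPolynomial.X s * MvPolynomial.C (α s)) +
      ∑ x, (∑ y, (∑ s, MvPolynomial.X s * MvPolynomial.C (d s y i)) * MvPolynomial.C (c y x)) *
        (∑ t, MvPolynomial.X t * MvPolynomial.C (d t x j)), ?_, ?_⟩
    · refine le_trans (MvPolynomial.totalDegree_add _ _) (max_le ?_ ?_)
      · exact le_trans (tpq_lin_deg α) one_le_two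
      · refine le_trans (MvPolynomial.totalDegree_finset_sum _ _) (Finset.sup_le fun x _ => ?_)
        refine le_trans (MvPolynomial.totalDegree_mul _ _) ?_
        have h2 : (∑ t, MvPolynomial.X t * MvPolynomial.C (d t x j) :
            MvPolynomial (Fin k) ℂ).totalDegree ≤ 1 := tpq_lin_deg _
        have h1 : (∑ y, (∑ s, MvPolynomial.X s * MvPolynomial.C (d s y i)) *
            MvPolynomial.C (c y x) : MvPolynomial (Fin k) ℂ).totalDegree ≤ 1 := by
          refine le_trans (MvPolynomial.totalDegree_finset_sum _ _)
            (Finset.sup_le fun y _ => ?_)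
          refine le_trans (MvPolynomial.totalDegree_mul _ _) ?_
          simpa [MvPolynomial.totalDegree_C] using tpq_lin_deg (fun s => d s y i)
        omega
    · intro q
      have hentry : (A q + (D q)ᵀ * (C 0)⁻¹ * D q) i j =
          A q i j + ∑ x, (∑ y, D q y i * c y x) * D q x j := by
        simp [Matrix.add_apply, Matrix.mul_apply, Matrix.transpose_apply, hc,
          Finset.sum_mul]
      rw [hentry, hAlin]
      simp only [_root_.map_add, map_sum, _root_.map_mul, MvPolynomial.eval_X, MvPolynomial.eval_C]
      refine congrArg₂ (· + ·) rfl ?_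
      refine Finset.sum_congr rfl fun x _ => ?_
      rw [hDlin q x j]
      refine congrArg₂ (· * ·) ?_ rfl
      refine Finset.sum_congr rfl fun y _ => ?_
      rw [hDlin q y i]
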